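/- For any prime p and any integer a with 0 < a < p, the product ∏_{k=1}^{a} (k - p) is congruent to a!·(1 - p·∑_{k=1}^{a} 1/k) modulo p², where the sum ∑ 1/k is interpreted via modular inverses of k modulo p². -/

import Mathlib

lemma aux_prod (p : ℕ) (s : Finset ℕ)
    (hinv : ∀ k ∈ s, (k : ZMod (p ^ 2)) * (k : ZMod (p ^ 2))⁻¹ = 1)
    (hp2 : (p : ZMod (p ^ 2)) * (p : ZMod (p ^ 2)) = 0) :
    (∏ k ∈ s, ((k : ZMod (p ^ 2)) - (p : ZMod (p ^ 2)))) =
      (∏ k ∈ s, (k : ZMod (p ^ 2))) *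
        (1 - (p : ZMod (p ^ 2)) * ∑ k ∈ s, (k : ZMod (p ^ 2))⁻¹) := by
  induction s using Finset.induction with
  | empty => simp
  | @insert x s hx ih =>
    rw [Finset.prod_insert hx, Finset.prod_insert hx, Finset.sum_insert hx,
      ih (fun k hk => hinv k (Finset.mem_insert_of_mem hk))]
    have hxinv := hinv x (Finset.mem_insert_self x s)
    set P := (p : ZMod (p ^ 2))
    set X := (x : ZMod (p ^ 2))
    set S := ∑ k ∈ s, (k : ZMod (p ^ 2))⁻¹
    set Q := ∏ k ∈ s, (k : ZMod (p ^ 2))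
    have : (X - P) * (1 - P * S) = X * (1 - P * (X⁻¹ + S)) := by
      linear_combination P * hxinv + S * hp2
    linear_combination Q * this + (1 - P * (X⁻¹ + S)) * 0

theorem stmt_2 (p : ℕ) (hp : p.Prime) (a : ℕ) (ha0 : 0 < a) (hap : a < p) :
    (∏ k ∈ Finset.Icc 1 a, ((k : ZMod (p ^ 2)) - (p : ZMod (p ^ 2)))) =
      (a.factorial : ZMod (p ^ 2)) *
        (1 - (p : ZMod (p ^ 2)) * ∑ k ∈ Finset.Icc 1 a, (k : ZMod (p ^ 2))⁻¹) := by
  have hp2 : (p : ZMod (p ^ 2)) * (p : ZMod (p ^ 2)) = 0 := by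
    have h : (p : ZMod (p ^ 2)) * p = ((p ^ 2 : ℕ) : ZMod (p ^ 2)) := by push_cast; ring
    rw [h, ZMod.natCast_self]
  have hne : NeZero (p ^ 2) := ⟨pow_ne_zero 2 hp.pos.ne'⟩
  have hinv : ∀ k ∈ Finset.Icc 1 a, (k : ZMod (p ^ 2)) * (k : ZMod (p ^ 2))⁻¹ = 1 := by
    intro k hk
    simp only [Finset.mem_Icc] at hk
    apply ZMod.mul_inv_of_unit
    rw [ZMod.isUnit_iff_coprime]
    exact (Nat.Coprime.pow_right 2
      ((hp.coprime_iff_not_dvd.mpr (Nat.not_dvd_of_pos_of_lt (by omega) (by omega))).symm))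
  rw [aux_prod p _ hinv hp2]
  congr 1
  rw [← Nat.cast_prod]
  congr 1
  rw [← Finset.Ico_add_one_right_eq_Icc]
  exact Finset.prod_Ico_id_eq_factorial a
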